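/- arXiv:2102.03730 — 6 statements merged into one kernel-verified Lean document; each statement's English description precedes it below -/
import Mathlib

section
/- Let C be a graded classical 2-absorbing second submodule of M and let I = ⊕_{γ∈G} I_γ be a graded ideal of R. Then for every r, s ∈ h(R), every γ ∈ G, and every completely graded irreducible submodule U of M with r·s·I_γ·C ⊆ U, either r·I_γ·C ⊆ U or s·I_γ·C ⊆ U or r·s·C ⊆ U. -/
open Pointwise

section GradedDefs

variable {G : Type*} [Group G] [DecidableEq G] {R : Type*} [CommRing R]
  {M : Type*} [AddCommGroup M] [Module R M]

/-- `R` is a `G`-graded commutative ring via the additive subgroups `𝒜 α`: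
`R_α R_β ⊆ R_{αβ}` and `R = ⊕_{α ∈ G} R_α`. -/
structure IsRingGrading (𝒜 : G → AddSubgroup R) : Prop where
  one_mem : (1 : R) ∈ 𝒜 1
  mul_mem : ∀ ⦃α β : G⦄ ⦃r s : R⦄, r ∈ 𝒜 α → s ∈ 𝒜 β → r * s ∈ 𝒜 (α * β)
  isInternal : DirectSum.IsInternal 𝒜

/-- `M` is a graded module over the `G`-graded ring `R`:
`R_α M_β ⊆ M_{αβ}` and `M = ⊕_{α ∈ G} M_α`. -/
structure IsModuleGrading (𝒜 : G → AddSubgroup R) (ℳ : G → AddSubgroup M) : Prop where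
  smul_mem : ∀ ⦃α β : G⦄ ⦃r : R⦄ ⦃m : M⦄, r ∈ 𝒜 α → m ∈ ℳ β → r • m ∈ ℳ (α * β)
  isInternal : DirectSum.IsInternal ℳ

/-- A submodule `N` of `M` is a graded submodule iff `N = ⊕_{α ∈ G} (N ∩ M_α)`,
equivalently, every element of `N` is a sum of homogeneous elements of `N`. -/
def IsGradedSubmodule (ℳ : G → AddSubgroup M) (N : Submodule R M) : Prop :=
  ∀ n ∈ N, n ∈ Submodule.span R {m : M | m ∈ N ∧ ∃ α, m ∈ ℳ α}

/-- An ideal `I` of `R` is a graded ideal iff `I = ⊕_{α ∈ G} (I ∩ R_α)`. -/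
def IsGradedIdeal (𝒜 : G → AddSubgroup R) (I : Ideal R) : Prop :=
  ∀ r ∈ I, r ∈ Ideal.span {s : R | s ∈ I ∧ ∃ α, s ∈ 𝒜 α}

/-- A proper graded submodule `C` of `M` is completely graded irreducible if whenever
`C = ⋂_{λ ∈ Δ} C_λ` for a family of graded submodules `C_λ`, then `C = C_β` for some `β`. -/
def CompletelyGradedIrreducible (ℳ : G → AddSubgroup M) (C : Submodule R M) : Prop :=
  IsGradedSubmodule ℳ C ∧ C ≠ ⊤ ∧
    ∀ S : Set (Submodule R M), (∀ D ∈ S, IsGradedSubmodule ℳ D) → C = sInf S → C ∈ S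

/-- A non-zero graded submodule `C` of `M` is a graded classical 2-absorbing second submodule
if whenever `r, s, t ∈ h(R)`, `U` is a completely graded irreducible submodule of `M` and
`r·s·t·C ⊆ U`, then `r·s·C ⊆ U` or `s·t·C ⊆ U` or `r·t·C ⊆ U`. -/
def IsGrClassical2AbsorbingSecond (𝒜 : G → AddSubgroup R) (ℳ : G → AddSubgroup M)
    (C : Submodule R M) : Prop :=
  C ≠ ⊥ ∧ IsGradedSubmodule ℳ C ∧
    ∀ r s t : R, (∃ α, r ∈ 𝒜 α) → (∃ β, s ∈ 𝒜 β) → (∃ γ, t ∈ 𝒜 γ) →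
      ∀ U : Submodule R M, CompletelyGradedIrreducible ℳ U →
        r • s • t • C ≤ U → (r • s • C ≤ U ∨ s • t • C ≤ U ∨ r • t • C ≤ U)

/-- A non-zero graded submodule `C` of `M` is a graded strongly classical 2-absorbing second
submodule if whenever `r, s, t ∈ h(R)`, `U₁, U₂, U₃` are completely graded irreducible
submodules of `M` and `r·s·t·C ⊆ U₁ ∩ U₂ ∩ U₃`, then `r·s·C ⊆ U₁ ∩ U₂ ∩ U₃` or
`s·t·C ⊆ U₁ ∩ U₂ ∩ U₃` or `r·t·C ⊆ U₁ ∩ U₂ ∩ U₃`. -/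
def IsGrStronglyClassical2AbsorbingSecond (𝒜 : G → AddSubgroup R) (ℳ : G → AddSubgroup M)
    (C : Submodule R M) : Prop :=
  C ≠ ⊥ ∧ IsGradedSubmodule ℳ C ∧
    ∀ r s t : R, (∃ α, r ∈ 𝒜 α) → (∃ β, s ∈ 𝒜 β) → (∃ γ, t ∈ 𝒜 γ) →
      ∀ U₁ U₂ U₃ : Submodule R M, CompletelyGradedIrreducible ℳ U₁ →
        CompletelyGradedIrreducible ℳ U₂ → CompletelyGradedIrreducible ℳ U₃ →
        r • s • t • C ≤ U₁ ⊓ U₂ ⊓ U₃ →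
        (r • s • C ≤ U₁ ⊓ U₂ ⊓ U₃ ∨ s • t • C ≤ U₁ ⊓ U₂ ⊓ U₃ ∨ r • t • C ≤ U₁ ⊓ U₂ ⊓ U₃)

/-- A non-zero graded submodule `S` of `M` is a graded weakly second submodule if whenever
`r, s ∈ h(R)`, `N` is a graded submodule of `M` and `r·s·S ⊆ N`, then `r·S ⊆ N` or `s·S ⊆ N`. -/
def IsGrWeaklySecond (𝒜 : G → AddSubgroup R) (ℳ : G → AddSubgroup M)
    (S : Submodule R M) : Prop :=
  S ≠ ⊥ ∧ IsGradedSubmodule ℳ S ∧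
    ∀ r s : R, (∃ α, r ∈ 𝒜 α) → (∃ β, s ∈ 𝒜 β) →
      ∀ N : Submodule R M, IsGradedSubmodule ℳ N →
        r • s • S ≤ N → (r • S ≤ N ∨ s • S ≤ N)

/-- A proper graded ideal `I` of `R` is a graded 2-absorbing ideal if whenever `r, s, t ∈ h(R)`
with `r·s·t ∈ I`, then `r·s ∈ I` or `r·t ∈ I` or `s·t ∈ I`. -/
def IsGr2AbsorbingIdeal (𝒜 : G → AddSubgroup R) (I : Ideal R) : Prop :=
  I ≠ ⊤ ∧ IsGradedIdeal 𝒜 I ∧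
    ∀ r s t : R, (∃ α, r ∈ 𝒜 α) → (∃ β, s ∈ 𝒜 β) → (∃ γ, t ∈ 𝒜 γ) →
      r * s * t ∈ I → (r * s ∈ I ∨ r * t ∈ I ∨ s * t ∈ I)

end GradedDefs

private lemma smul_le_iff' {R : Type*} [CommRing R] {M : Type*} [AddCommGroup M] [Module R M]
    (a : R) (N U : Submodule R M) : a • N ≤ U ↔ ∀ x ∈ N, a • x ∈ U := by
  constructor
  · intro h x hx; exact h (Submodule.smul_mem_pointwise_smul x a N hx)
  · intro h y hy
    obtain ⟨x, hx, rfl⟩ := Set.mem_smul_set.mp hy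
    exact h x hx

private lemma smul_le_iff2 {R : Type*} [CommRing R] {M : Type*} [AddCommGroup M] [Module R M]
    (a b : R) (N U : Submodule R M) : a • b • N ≤ U ↔ ∀ x ∈ N, a • b • x ∈ U := by
  rw [smul_le_iff']
  constructor
  · intro h x hx; exact h _ (Submodule.smul_mem_pointwise_smul x b N hx)
  · intro h y hy
    obtain ⟨x, hx, rfl⟩ := Set.mem_smul_set.mp hy
    exact h x hx

theorem stmt0 {G : Type*} [Group G] [DecidableEq G] {R : Type*} [CommRing R]
    {M : Type*} [AddCommGroup M] [Module R M]
    (𝒜 : G → AddSubgroup R) (ℳ : G → AddSubgroup M)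
    (h𝒜 : IsRingGrading 𝒜) (hℳ : IsModuleGrading 𝒜 ℳ)
    (C : Submodule R M) (hC : IsGrClassical2AbsorbingSecond 𝒜 ℳ C)
    (I : Ideal R) (hI : IsGradedIdeal 𝒜 I)
    (r s : R) (hr : ∃ α, r ∈ 𝒜 α) (hs : ∃ β, s ∈ 𝒜 β) (γ : G)
    (U : Submodule R M) (hU : CompletelyGradedIrreducible ℳ U)
    (hsub : ∀ a : R, a ∈ I → a ∈ 𝒜 γ → r • s • a • C ≤ U) :
    (∀ a : R, a ∈ I → a ∈ 𝒜 γ → r • a • C ≤ U) ∨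
      (∀ a : R, a ∈ I → a ∈ 𝒜 γ → s • a • C ≤ U) ∨ r • s • C ≤ U := by
  by_cases hrs : r • s • C ≤ U
  · exact Or.inr (Or.inr hrs)
  by_cases h1 : ∀ a : R, a ∈ I → a ∈ 𝒜 γ → r • a • C ≤ U
  · exact Or.inl h1
  by_cases h2 : ∀ a : R, a ∈ I → a ∈ 𝒜 γ → s • a • C ≤ U
  · exact Or.inr (Or.inl h2)
  exfalso
  push_neg at h1 h2
  obtain ⟨a₁, ha₁I, ha₁γ, ha₁⟩ := h1
  obtain ⟨a₂, ha₂I, ha₂γ, ha₂⟩ := h2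
  -- from 2-absorbing second applied to r, s, a₁
  have key₁ := hC.2.2 r s a₁ hr hs ⟨γ, ha₁γ⟩ U hU (hsub a₁ ha₁I ha₁γ)
  have hsa₁ : s • a₁ • C ≤ U := by
    rcases key₁ with h | h | h
    · exact absurd h hrs
    · exact h
    · exact absurd h ha₁
  have key₂ := hC.2.2 r s a₂ hr hs ⟨γ, ha₂γ⟩ U hU (hsub a₂ ha₂I ha₂γ)
  have hra₂ : r • a₂ • C ≤ U := by
    rcases key₂ with h | h | h
    · exact absurd h hrs
    · exact absurd h ha₂
    · exact h
  -- now consider a₁ + a₂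
  have haI : a₁ + a₂ ∈ I := I.add_mem ha₁I ha₂I
  have haγ : a₁ + a₂ ∈ 𝒜 γ := (𝒜 γ).add_mem ha₁γ ha₂γ
  have key := hC.2.2 r s (a₁ + a₂) hr hs ⟨γ, haγ⟩ U hU (hsub _ haI haγ)
  rcases key with h | h | h
  · exact hrs h
  · -- s • (a₁+a₂) • C ≤ U, combined with hsa₁ gives s • a₂ • C ≤ U, contra ha₂
    apply ha₂
    rw [smul_le_iff2] at h hsa₁ ⊢
    intro x hx
    have := U.sub_mem (h x hx) (hsa₁ x hx)
    rwa [← smul_sub, ← sub_smul, add_sub_cancel_left] at this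
  · apply ha₁
    rw [smul_le_iff2] at h hra₂ ⊢
    intro x hx
    have := U.sub_mem (h x hx) (hra₂ x hx)
    rwa [← smul_sub, ← sub_smul, add_sub_cancel_right] at this
end

section
/- Let C be a non-zero graded submodule of M. Then C is a graded classical 2-absorbing second submodule of M if and only if for all graded ideals I = ⊕_{α∈G} I_α, J = ⊕_{β∈G} J_β, K = ⊕_{γ∈G} K_γ of R, all α, β, γ ∈ G, and every completely graded irreducible submodule U of M with I_α·J_β·K_γ·C ⊆ U, either J_β·K_γ·C ⊆ U or I_α·J_β·C ⊆ U or I_α·K_γ·C ⊆ U. -/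
open Pointwise

section AbsAux

variable {X : Type*} [AddCommMonoid X]

theorem abs_lemma1 (A B K : Set X)
    (hK : ∀ {x y : X}, x ∈ K → y ∈ K → x + y ∈ K)
    (P : X → X → Prop)
    (hcr : ∀ x y z : X, P x y → P x (y + z) → P x z)
    (htr : ∀ a ∈ A, ∀ b ∈ B, ∀ c ∈ K, P a b ∨ P b c ∨ P a c)
    {a : X} (ha : a ∈ A) {b : X} (hb : b ∈ B) :
    P a b ∨ (∀ c ∈ K, P a c) ∨ (∀ c ∈ K, P b c) := by
  by_contra h
  push_neg at h
  obtain ⟨hab, ⟨c₁, hc₁K, hac₁⟩, c₂, hc₂K, hbc₂⟩ := h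
  have hbc₁ : P b c₁ := by
    rcases htr a ha b hb c₁ hc₁K with h | h | h
    · exact absurd h hab
    · exact h
    · exact absurd h hac₁
  have hac₂ : P a c₂ := by
    rcases htr a ha b hb c₂ hc₂K with h | h | h
    · exact absurd h hab
    · exact absurd h hbc₂
    · exact h
  rcases htr a ha b hb (c₁ + c₂) (hK hc₁K hc₂K) with h | h | h
  · exact absurd h hab
  · exact absurd (hcr b c₁ c₂ hbc₁ h) hbc₂
  · rw [add_comm] at h
    exact absurd (hcr a c₂ c₁ hac₂ h) hac₁

theorem abs_lemma2 (A B K : Set X)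
    (hB : ∀ {x y : X}, x ∈ B → y ∈ B → x + y ∈ B)
    (hK : ∀ {x y : X}, x ∈ K → y ∈ K → x + y ∈ K)
    (P : X → X → Prop)
    (hsymm : ∀ x y : X, P x y → P y x)
    (hcr : ∀ x y z : X, P x y → P x (y + z) → P x z)
    (htr : ∀ a ∈ A, ∀ b ∈ B, ∀ c ∈ K, P a b ∨ P b c ∨ P a c)
    {a : X} (ha : a ∈ A) :
    (∀ b ∈ B, ∀ c ∈ K, P b c) ∨ (∀ b ∈ B, P a b) ∨ (∀ c ∈ K, P a c) := by
  have hcl : ∀ x y z : X, P x z → P (x + y) z → P y z := fun x y z h1 h2 =>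
    hsymm _ _ (hcr z x y (hsymm _ _ h1) (hsymm _ _ h2))
  have htr' : ∀ a ∈ A, ∀ c ∈ K, ∀ b ∈ B, P a c ∨ P c b ∨ P a b := by
    intro a ha c hc b hb
    rcases htr a ha b hb c hc with h | h | h
    · exact Or.inr (Or.inr h)
    · exact Or.inr (Or.inl (hsymm _ _ h))
    · exact Or.inl h
  by_contra h
  push_neg at h
  obtain ⟨⟨b₀, hb₀B, c₀, hc₀K, hb₀c₀⟩, ⟨b₁, hb₁B, hab₁⟩, c₁, hc₁K, hac₁⟩ := h
  have hb₁all : ∀ c ∈ K, P b₁ c := by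
    rcases abs_lemma1 A B K hK P hcr htr ha hb₁B with h | h | h
    · exact absurd h hab₁
    · exact absurd (h c₁ hc₁K) hac₁
    · exact h
  have hc₁all : ∀ b ∈ B, P b c₁ := by
    rcases abs_lemma1 A K B hB P hcr htr' ha hc₁K with h | h | h
    · exact absurd h hac₁
    · exact fun b hbB => absurd (h b₁ hb₁B) hab₁
    · exact fun b hbB => hsymm _ _ (h b hbB)
  have hboth : P a b₀ ∧ P a c₀ := by
    have h0 : P a b₀ ∨ P a c₀ := by
      rcases htr a ha b₀ hb₀B c₀ hc₀K with h | h | h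
      · exact Or.inl h
      · exact absurd h hb₀c₀
      · exact Or.inr h
    rcases h0 with h1 | h1
    · refine ⟨h1, ?_⟩
      rcases htr a ha (b₀ + b₁) (hB hb₀B hb₁B) c₀ hc₀K with h | h | h
      · exact absurd (hcr a b₀ b₁ h1 h) hab₁
      · rw [add_comm] at h
        exact absurd (hcl b₁ b₀ c₀ (hb₁all c₀ hc₀K) h) hb₀c₀
      · exact h
    · refine ⟨?_, h1⟩
      rcases htr a ha b₀ hb₀B (c₀ + c₁) (hK hc₀K hc₁K) with h | h | h
      · exact h
      · rw [add_comm] at h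
        exact absurd (hcr b₀ c₁ c₀ (hc₁all b₀ hb₀B) h) hb₀c₀
      · exact absurd (hcr a c₀ c₁ h1 h) hac₁
  rcases htr a ha (b₀ + b₁) (hB hb₀B hb₁B) (c₀ + c₁) (hK hc₀K hc₁K) with h | h | h
  · exact absurd (hcr a b₀ b₁ hboth.1 h) hab₁
  · rw [add_comm b₀ b₁] at h
    have hb₀cc : P b₀ (c₀ + c₁) := hcl b₁ b₀ (c₀ + c₁) (hb₁all _ (hK hc₀K hc₁K)) h
    rw [add_comm c₀ c₁] at hb₀cc
    exact absurd (hcr b₀ c₁ c₀ (hc₁all b₀ hb₀B) hb₀cc) hb₀c₀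
  · exact absurd (hcr a c₀ c₁ hboth.2 h) hac₁

theorem abs_main (A B K : Set X)
    (hA : ∀ {x y : X}, x ∈ A → y ∈ A → x + y ∈ A)
    (hB : ∀ {x y : X}, x ∈ B → y ∈ B → x + y ∈ B)
    (hK : ∀ {x y : X}, x ∈ K → y ∈ K → x + y ∈ K)
    (P : X → X → Prop)
    (hsymm : ∀ x y : X, P x y → P y x)
    (hcr : ∀ x y z : X, P x y → P x (y + z) → P x z)
    (htr : ∀ a ∈ A, ∀ b ∈ B, ∀ c ∈ K, P a b ∨ P b c ∨ P a c) :
    (∀ b ∈ B, ∀ c ∈ K, P b c) ∨ (∀ a ∈ A, ∀ b ∈ B, P a b) ∨ (∀ a ∈ A, ∀ c ∈ K, P a c) := by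
  by_contra h
  push_neg at h
  obtain ⟨⟨b₀, hb₀B, c₀, hc₀K, hb₀c₀⟩, ⟨a₁, ha₁A, b₁, hb₁B, ha₁b₁⟩, a₂, ha₂A, c₂, hc₂K, ha₂c₂⟩ := h
  have ha₁ : ∀ c ∈ K, P a₁ c := by
    rcases abs_lemma2 A B K hB hK P hsymm hcr htr ha₁A with h | h | h
    · exact absurd (h b₀ hb₀B c₀ hc₀K) hb₀c₀
    · exact absurd (h b₁ hb₁B) ha₁b₁
    · exact h
  have ha₂ : ∀ b ∈ B, P a₂ b := by
    rcases abs_lemma2 A B K hB hK P hsymm hcr htr ha₂A with h | h | h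
    · exact absurd (h b₀ hb₀B c₀ hc₀K) hb₀c₀
    · exact h
    · exact absurd (h c₂ hc₂K) ha₂c₂
  have hcl : ∀ x y z : X, P x z → P (x + y) z → P y z := fun x y z h1 h2 =>
    hsymm _ _ (hcr z x y (hsymm _ _ h1) (hsymm _ _ h2))
  rcases abs_lemma2 A B K hB hK P hsymm hcr htr (hA ha₁A ha₂A) with h | h | h
  · exact absurd (h b₀ hb₀B c₀ hc₀K) hb₀c₀
  · exact absurd (hcl a₂ a₁ b₁ (ha₂ b₁ hb₁B) (by rw [add_comm a₂ a₁]; exact h b₁ hb₁B)) ha₁b₁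
  · exact absurd (hcl a₁ a₂ c₂ (ha₁ c₂ hc₂K) (h c₂ hc₂K)) ha₂c₂

end AbsAux

theorem stmt2 {G : Type*} [Group G] [DecidableEq G] {R : Type*} [CommRing R]
    {M : Type*} [AddCommGroup M] [Module R M]
    (𝒜 : G → AddSubgroup R) (ℳ : G → AddSubgroup M)
    (h𝒜 : IsRingGrading 𝒜) (hℳ : IsModuleGrading 𝒜 ℳ)
    (C : Submodule R M) (hC0 : C ≠ ⊥) (hCgr : IsGradedSubmodule ℳ C) :
    IsGrClassical2AbsorbingSecond 𝒜 ℳ C ↔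
      ∀ I J K : Ideal R, IsGradedIdeal 𝒜 I → IsGradedIdeal 𝒜 J → IsGradedIdeal 𝒜 K →
        ∀ (α β γ : G) (U : Submodule R M), CompletelyGradedIrreducible ℳ U →
          (∀ a b c : R, a ∈ I → a ∈ 𝒜 α → b ∈ J → b ∈ 𝒜 β → c ∈ K → c ∈ 𝒜 γ →
            a • b • c • C ≤ U) →
          ((∀ b c : R, b ∈ J → b ∈ 𝒜 β → c ∈ K → c ∈ 𝒜 γ → b • c • C ≤ U) ∨
            (∀ a b : R, a ∈ I → a ∈ 𝒜 α → b ∈ J → b ∈ 𝒜 β → a • b • C ≤ U) ∨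
            (∀ a c : R, a ∈ I → a ∈ 𝒜 α → c ∈ K → c ∈ 𝒜 γ → a • c • C ≤ U)) := by
  classical
  constructor
  · rintro ⟨-, -, htriple⟩
    intro I J K hI hJ hK α β γ U hU hsub
    set A : Set R := {x | x ∈ I ∧ x ∈ 𝒜 α} with hA'
    set B : Set R := {x | x ∈ J ∧ x ∈ 𝒜 β} with hB'
    set Kc : Set R := {x | x ∈ K ∧ x ∈ 𝒜 γ} with hK'
    set P : R → R → Prop := fun x y => (x * y) • C ≤ U with hP
    have hmem : ∀ (x : R) (n : M), n ∈ C → x • n ∈ x • C := fun x n hn =>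
      Submodule.smul_mem_pointwise_smul n x C hn
    have hsymm : ∀ x y, P x y → P y x := by
      intro x y h
      simp only [hP] at h ⊢
      rwa [mul_comm]
    have hcr : ∀ x y z, P x y → P x (y + z) → P x z := by
      intro x y z h1 h2
      simp only [hP] at h1 h2 ⊢
      rintro m ⟨n, hn, rfl⟩
      have e : (x * z) • n = (x * (y + z)) • n - (x * y) • n := by
        rw [mul_add, add_smul]; abel
      show (x * z) • n ∈ U
      rw [e]
      exact U.sub_mem (h2 (hmem _ n hn)) (h1 (hmem _ n hn))
    have htr : ∀ a ∈ A, ∀ b ∈ B, ∀ c ∈ Kc, P a b ∨ P b c ∨ P a c := by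
      rintro a ⟨haI, haα⟩ b ⟨hbJ, hbβ⟩ c ⟨hcK, hcγ⟩
      have h0 : a • b • c • C ≤ U := hsub a b c haI haα hbJ hbβ hcK hcγ
      rcases htriple a b c ⟨α, haα⟩ ⟨β, hbβ⟩ ⟨γ, hcγ⟩ U hU h0 with h | h | h
      · exact Or.inl (by simp only [hP]; rwa [← smul_smul])
      · exact Or.inr (Or.inl (by simp only [hP]; rwa [← smul_smul]))
      · exact Or.inr (Or.inr (by simp only [hP]; rwa [← smul_smul]))
    have hAc : ∀ {x y : R}, x ∈ A → y ∈ A → x + y ∈ A := fun hx hy =>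
      ⟨I.add_mem hx.1 hy.1, (𝒜 α).add_mem hx.2 hy.2⟩
    have hBc : ∀ {x y : R}, x ∈ B → y ∈ B → x + y ∈ B := fun hx hy =>
      ⟨J.add_mem hx.1 hy.1, (𝒜 β).add_mem hx.2 hy.2⟩
    have hKc : ∀ {x y : R}, x ∈ Kc → y ∈ Kc → x + y ∈ Kc := fun hx hy =>
      ⟨K.add_mem hx.1 hy.1, (𝒜 γ).add_mem hx.2 hy.2⟩
    rcases abs_main A B Kc hAc hBc hKc P hsymm hcr htr with h | h | h
    · refine Or.inl fun b c hbJ hbβ hcK hcγ => ?_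
      have := h b ⟨hbJ, hbβ⟩ c ⟨hcK, hcγ⟩
      simp only [hP] at this
      rwa [smul_smul]
    · refine Or.inr (Or.inl fun a b haI haα hbJ hbβ => ?_)
      have := h a ⟨haI, haα⟩ b ⟨hbJ, hbβ⟩
      simp only [hP] at this
      rwa [smul_smul]
    · refine Or.inr (Or.inr fun a c haI haα hcK hcγ => ?_)
      have := h a ⟨haI, haα⟩ c ⟨hcK, hcγ⟩
      simp only [hP] at this
      rwa [smul_smul]
  · intro hRHS
    refine ⟨hC0, hCgr, ?_⟩
    rintro r s t ⟨α, hr⟩ ⟨β, hs⟩ ⟨γ, ht⟩ U hU hrst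
    have hgr : ∀ (x : R) (δ : G), x ∈ 𝒜 δ → IsGradedIdeal 𝒜 (Ideal.span {x}) := by
      intro x δ hx y hy
      have hsx : x ∈ {s : R | s ∈ Ideal.span {x} ∧ ∃ δ', s ∈ 𝒜 δ'} :=
        ⟨Ideal.mem_span_singleton_self x, δ, hx⟩
      exact Ideal.span_mono (Set.singleton_subset_iff.mpr hsx) hy
    have hrstC : ((r * s) * t) • C ≤ U := by
      rwa [← smul_smul, ← smul_smul]
    have hsub : ∀ a b c : R, a ∈ Ideal.span {r} → a ∈ 𝒜 α → b ∈ Ideal.span {s} →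
        b ∈ 𝒜 β → c ∈ Ideal.span {t} → c ∈ 𝒜 γ → a • b • c • C ≤ U := by
      intro a b c haI _ hbJ _ hcK _
      obtain ⟨x, rfl⟩ := Ideal.mem_span_singleton'.mp haI
      obtain ⟨y, rfl⟩ := Ideal.mem_span_singleton'.mp hbJ
      obtain ⟨z, rfl⟩ := Ideal.mem_span_singleton'.mp hcK
      have e : x * r * (y * s) * (z * t) = (x * (y * z)) * (r * s * t) := by ring
      calc (x * r) • (y * s) • (z * t) • C
          = (x * r * (y * s) * (z * t)) • C := by rw [smul_smul, smul_smul]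
        _ = ((x * (y * z)) * (r * s * t)) • C := by rw [e]
        _ = (x * (y * z)) • ((r * s * t) • C) := by rw [smul_smul]
        _ ≤ U := by
            intro m hm
            obtain ⟨n, hn, rfl⟩ := hm
            exact U.smul_mem _ (hrstC hn)
    rcases hRHS (Ideal.span {r}) (Ideal.span {s}) (Ideal.span {t}) (hgr r α hr) (hgr s β hs)
      (hgr t γ ht) α β γ U hU hsub with h | h | h
    · exact Or.inr (Or.inl (h s t (Ideal.mem_span_singleton_self s) hs
        (Ideal.mem_span_singleton_self t) ht))
    · exact Or.inl (h r s (Ideal.mem_span_singleton_self r) hr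
        (Ideal.mem_span_singleton_self s) hs)
    · exact Or.inr (Or.inr (h r t (Ideal.mem_span_singleton_self r) hr
        (Ideal.mem_span_singleton_self t) ht))
end

section
/- Let C be a graded classical 2-absorbing second submodule of M and let I = ⊕_{α∈G} I_α be a graded ideal of R. Then for each α ∈ G, I_α^n·C = I_α^{n+1}·C for all integers n ≥ 2. -/
open Pointwise

open Pointwise DirectSum
set_option linter.unusedSectionVars false
set_option maxHeartbeats 1000000

section ProjInfra

variable {G : Type*} [Group G] [DecidableEq G] {A : Type*} [AddCommGroup A]

noncomputable def gradeEquiv (𝒜 : G → AddSubgroup A) (h : DirectSum.IsInternal 𝒜) :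
    (⨁ γ, 𝒜 γ) ≃+ A := AddEquiv.ofBijective (DirectSum.coeAddMonoidHom 𝒜) h

theorem gradeEquiv_of (𝒜 : G → AddSubgroup A) (h : DirectSum.IsInternal 𝒜) (γ : G) (x : 𝒜 γ) :
    gradeEquiv 𝒜 h (DirectSum.of (fun i => 𝒜 i) γ x) = x :=
  DirectSum.coeAddMonoidHom_of _ _ _

/-- Projection onto the `γ`-component of an internally graded abelian group. -/
noncomputable def proj (𝒜 : G → AddSubgroup A) (h : DirectSum.IsInternal 𝒜) (γ : G) : A →+ A where
  toFun a := ((gradeEquiv 𝒜 h).symm a γ : A)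
  map_zero' := by simp only [map_zero]; rfl
  map_add' a b := by simp only [map_add]; rfl

theorem proj_mem (𝒜 : G → AddSubgroup A) (h : DirectSum.IsInternal 𝒜) (γ : G) (a : A) :
    proj 𝒜 h γ a ∈ 𝒜 γ := ((gradeEquiv 𝒜 h).symm a γ).2

theorem proj_of_mem (𝒜 : G → AddSubgroup A) (h : DirectSum.IsInternal 𝒜) {γ δ : G} {a : A}
    (ha : a ∈ 𝒜 δ) : proj 𝒜 h γ a = if δ = γ then a else 0 := by
  have e1 : (gradeEquiv 𝒜 h).symm a = DirectSum.of (fun i => 𝒜 i) δ ⟨a, ha⟩ := by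
    apply (AddEquiv.symm_apply_eq _).2
    rw [gradeEquiv_of]
  show ((gradeEquiv 𝒜 h).symm a γ : A) = _
  rw [e1, DirectSum.coe_of_apply]
  split_ifs <;> rfl

theorem exists_sum_proj (𝒜 : G → AddSubgroup A) (h : DirectSum.IsInternal 𝒜) (a : A) :
    ∃ s : Finset G, (∑ γ ∈ s, proj 𝒜 h γ a = a) ∧ ∀ γ ∉ s, proj 𝒜 h γ a = 0 := by
  classical
  refine ⟨((gradeEquiv 𝒜 h).symm a).support, ?_, ?_⟩
  · conv_rhs => rw [← (gradeEquiv 𝒜 h).apply_symm_apply a,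
      ← DirectSum.sum_support_of ((gradeEquiv 𝒜 h).symm a)]
    rw [map_sum]
    exact Finset.sum_congr rfl fun γ _ => (gradeEquiv_of 𝒜 h γ _).symm
  · intro γ hγ
    show ((gradeEquiv 𝒜 h).symm a γ : A) = 0
    rw [DFinsupp.notMem_support_iff.1 hγ]
    rfl

end ProjInfra
section MainInfra

variable {G : Type*} [Group G] [DecidableEq G] {R : Type*} [CommRing R]
  {M : Type*} [AddCommGroup M] [Module R M]
  {𝒜 : G → AddSubgroup R} {ℳ : G → AddSubgroup M}

theorem proj_smul (h𝒜 : IsRingGrading 𝒜) (hℳ : IsModuleGrading 𝒜 ℳ)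
    {γ : G} {s : R} (hs : s ∈ 𝒜 γ) (β : G) (y : M) :
    proj ℳ hℳ.isInternal β (s • y) = s • proj ℳ hℳ.isInternal (γ⁻¹ * β) y := by
  classical
  obtain ⟨T, hT, hT0⟩ := exists_sum_proj ℳ hℳ.isInternal y
  conv_lhs => rw [← hT, Finset.smul_sum, map_sum]
  have e : ∀ δ ∈ T, proj ℳ hℳ.isInternal β (s • proj ℳ hℳ.isInternal δ y) =
      if δ = γ⁻¹ * β then s • proj ℳ hℳ.isInternal δ y else 0 := by
    intro δ _
    rw [proj_of_mem ℳ hℳ.isInternal (hℳ.smul_mem hs (proj_mem ℳ hℳ.isInternal δ y))]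
    congr 1
    simp only [eq_iff_iff]
    constructor
    · intro h; rw [← h]; group
    · intro h; rw [h]; group
  rw [Finset.sum_congr rfl e, Finset.sum_ite_eq' T (γ⁻¹ * β)
    (fun δ => s • proj ℳ hℳ.isInternal δ y)]
  split_ifs with h
  · rfl
  · rw [hT0 _ h, smul_zero]

theorem graded_proj_mem (h𝒜 : IsRingGrading 𝒜) (hℳ : IsModuleGrading 𝒜 ℳ)
    {N : Submodule R M} (hN : IsGradedSubmodule ℳ N) {x : M} (hx : x ∈ N) :
    ∀ β, proj ℳ hℳ.isInternal β x ∈ N := by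
  have hx' := hN x hx
  clear hx
  induction hx' using Submodule.span_induction with
  | mem y hy =>
    obtain ⟨hyN, γ, hyγ⟩ := hy
    intro β
    rw [proj_of_mem ℳ hℳ.isInternal hyγ]
    split_ifs
    · exact hyN
    · exact N.zero_mem
  | zero => intro β; rw [map_zero]; exact N.zero_mem
  | add y z hy hz ihy ihz => intro β; rw [map_add]; exact N.add_mem (ihy β) (ihz β)
  | smul r y hy ih =>
    intro β
    obtain ⟨T, hT, _⟩ := exists_sum_proj 𝒜 h𝒜.isInternal r
    rw [← hT, Finset.sum_smul, map_sum]
    refine Submodule.sum_mem N fun γ _ => ?_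
    rw [proj_smul h𝒜 hℳ (proj_mem 𝒜 h𝒜.isInternal γ r) β y]
    exact N.smul_mem _ (ih (γ⁻¹ * β))

theorem mem_of_all_proj (hℳ : IsModuleGrading 𝒜 ℳ) {N : Submodule R M} {x : M}
    (h : ∀ β, proj ℳ hℳ.isInternal β x ∈ N) : x ∈ N := by
  obtain ⟨T, hT, _⟩ := exists_sum_proj ℳ hℳ.isInternal x
  rw [← hT]
  exact Submodule.sum_mem N fun γ _ => h γ

/-- Separation by a completely graded irreducible submodule. -/
theorem exists_CGI (h𝒜 : IsRingGrading 𝒜) (hℳ : IsModuleGrading 𝒜 ℳ)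
    {N : Submodule R M} (hN : IsGradedSubmodule ℳ N) {x : M} (hx : x ∉ N) :
    ∃ U : Submodule R M, CompletelyGradedIrreducible ℳ U ∧ N ≤ U ∧ x ∉ U := by
  have hβ : ∃ β, proj ℳ hℳ.isInternal β x ∉ N := by
    by_contra h
    push_neg at h
    exact hx (mem_of_all_proj hℳ h)
  obtain ⟨β, hβ⟩ := hβ
  set m := proj ℳ hℳ.isInternal β x with hm
  set s : Set (Submodule R M) := {L | IsGradedSubmodule ℳ L ∧ N ≤ L ∧ m ∉ L} with hs
  have hNs : N ∈ s := ⟨hN, le_refl N, hβ⟩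
  obtain ⟨L, hNL, hLs, hLmax⟩ := zorn_le_nonempty₀ s (fun c hcs hchain y hy => by
    refine ⟨sSup c, ⟨?_, ?_, ?_⟩, fun z hz => le_sSup hz⟩
    · intro n hn
      rw [Submodule.mem_sSup_of_directed ⟨y, hy⟩ hchain.directedOn] at hn
      obtain ⟨D, hD, hnD⟩ := hn
      refine Submodule.span_mono ?_ ((hcs hD).1 n hnD)
      intro w hw
      exact And.intro ((le_sSup hD : D ≤ sSup c) hw.1) hw.2
    · exact le_trans (hcs hy).2.1 (le_sSup hy)
    · intro hmem
      rw [Submodule.mem_sSup_of_directed ⟨y, hy⟩ hchain.directedOn] at hmem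
      obtain ⟨D, hD, hmD⟩ := hmem
      exact (hcs hD).2.2 hmD) N hNs
  refine ⟨L, ⟨hLs.1, ?_, ?_⟩, hLs.2.1, ?_⟩
  · intro htop
    exact hLs.2.2 (htop ▸ Submodule.mem_top)
  · intro S hSgr hLeq
    by_contra hLS
    have hmD : ∀ D ∈ S, m ∈ D := by
      intro D hD
      have hLD : L ≤ D := hLeq ▸ sInf_le hD
      by_contra hmD
      have hDs : D ∈ s := ⟨hSgr D hD, hLs.2.1.trans hLD, hmD⟩
      have hDL : D ≤ L := hLmax hDs hLD
      exact hLS ((le_antisymm hLD hDL) ▸ hD)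
    have : m ∈ L := hLeq ▸ Submodule.mem_sInf.2 hmD
    exact hLs.2.2 this
  · intro hxL
    exact hLs.2.2 (graded_proj_mem h𝒜 hℳ hLs.1 hxL β)

theorem mem_ptsmul {r : R} {S : Submodule R M} {x : M} :
    x ∈ r • S ↔ ∃ y ∈ S, r • y = x := by
  rw [← SetLike.mem_coe, Submodule.coe_pointwise_smul]
  exact Set.mem_smul_set

theorem smul2_le {r s : R} {C U : Submodule R M} (h : ∀ c ∈ C, r • s • c ∈ U) :
    r • s • C ≤ U := by
  intro x hx
  rw [mem_ptsmul] at hx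
  obtain ⟨y, hy, rfl⟩ := hx
  rw [mem_ptsmul] at hy
  obtain ⟨c, hc, rfl⟩ := hy
  exact h c hc

theorem smul3_le {r s t : R} {C U : Submodule R M} (h : ∀ c ∈ C, r • s • t • c ∈ U) :
    r • s • t • C ≤ U := by
  intro x hx
  rw [mem_ptsmul] at hx
  obtain ⟨y, hy, rfl⟩ := hx
  rw [mem_ptsmul] at hy
  obtain ⟨z, hz, rfl⟩ := hy
  rw [mem_ptsmul] at hz
  obtain ⟨c, hc, rfl⟩ := hz
  exact h c hc

theorem prod_mem_pow (h𝒜 : IsRingGrading 𝒜) (α : G) :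
    ∀ (k : ℕ) (f : Fin k → R), (∀ i, f i ∈ 𝒜 α) → ∏ i, f i ∈ 𝒜 (α ^ k)
  | 0, f, _ => by simpa using h𝒜.one_mem
  | k + 1, f, hf => by
    rw [Fin.prod_univ_succ, pow_succ']
    exact h𝒜.mul_mem (hf 0) (prod_mem_pow h𝒜 α k (fun i => f i.succ) (fun i => hf i.succ))

/-- The generating set for `I_α^k • C`. -/
def IPowSet (𝒜 : G → AddSubgroup R) (C : Submodule R M) (I : Ideal R) (α : G) (k : ℕ) : Set M :=
  {x : M | ∃ f : Fin k → R, (∀ i, f i ∈ I ∧ f i ∈ 𝒜 α) ∧ ∃ c ∈ C, x = (∏ i, f i) • c}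

theorem spanS_graded (h𝒜 : IsRingGrading 𝒜) (hℳ : IsModuleGrading 𝒜 ℳ)
    {C : Submodule R M} (hC : IsGradedSubmodule ℳ C) (I : Ideal R) (α : G) (k : ℕ) :
    IsGradedSubmodule ℳ (Submodule.span R (IPowSet 𝒜 C I α k)) := by
  intro n hn
  induction hn using Submodule.span_induction with
  | mem x hx =>
    obtain ⟨f, hf, c, hc, rfl⟩ := hx
    have hc' := hC c hc
    clear hc
    induction hc' using Submodule.span_induction with
    | mem y hy =>
      obtain ⟨hyC, γ, hyγ⟩ := hy
      refine Submodule.subset_span ⟨?_, α ^ k * γ, hℳ.smul_mem (prod_mem_pow h𝒜 α k f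
        (fun i => (hf i).2)) hyγ⟩
      exact Submodule.subset_span ⟨f, hf, y, hyC, rfl⟩
    | zero => rw [smul_zero]; exact Submodule.zero_mem _
    | add y z _ _ ihy ihz => rw [smul_add]; exact Submodule.add_mem _ ihy ihz
    | smul r y _ ih => rw [smul_comm]; exact Submodule.smul_mem _ r ih
  | zero => exact Submodule.zero_mem _
  | add y z _ _ ihy ihz => exact Submodule.add_mem _ ihy ihz
  | smul r y _ ih => exact Submodule.smul_mem _ r ih

end MainInfra
section L1sec

variable {G : Type*} [Group G] [DecidableEq G] {R : Type*} [CommRing R]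
  {M : Type*} [AddCommGroup M] [Module R M]
  {𝒜 : G → AddSubgroup R} {ℳ : G → AddSubgroup M}

theorem L1 (h𝒜 : IsRingGrading 𝒜) (hℳ : IsModuleGrading 𝒜 ℳ)
    {C : Submodule R M} (hC : IsGrClassical2AbsorbingSecond 𝒜 ℳ C)
    (I : Ideal R) (α : G) {a b : R} (haI : a ∈ I) (haα : a ∈ 𝒜 α)
    (hbI : b ∈ I) (hbα : b ∈ 𝒜 α) :
    a • b • C ≤ Submodule.span R (IPowSet 𝒜 C I α 3) := by
  set N := Submodule.span R (IPowSet 𝒜 C I α 3) with hNdef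
  have hin : ∀ u v w : R, u ∈ I → u ∈ 𝒜 α → v ∈ I → v ∈ 𝒜 α → w ∈ I → w ∈ 𝒜 α →
      ∀ c ∈ C, u • v • w • c ∈ N := by
    intro u v w huI huα hvI hvα hwI hwα c hc
    refine Submodule.subset_span ⟨![u, v, w], ?_, c, hc, ?_⟩
    · intro i
      fin_cases i <;> simp [huI, huα, hvI, hvα, hwI, hwα]
    · rw [Fin.prod_univ_three]
      simp only [Matrix.cons_val_zero, Matrix.cons_val_one, Matrix.head_cons,
        Matrix.cons_val_two, Matrix.tail_cons]
      rw [smul_smul, smul_smul, mul_assoc]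
  by_contra hab
  rw [SetLike.not_le_iff_exists] at hab
  obtain ⟨x, hxmem, hxN⟩ := hab
  obtain ⟨U, hU, hNU, hxU⟩ := exists_CGI h𝒜 hℳ
    (spanS_graded h𝒜 hℳ hC.2.1 I α 3) hxN
  have habU : ¬ a • b • C ≤ U := fun h => hxU (h hxmem)
  have h1 : a • a • b • C ≤ U := smul3_le fun c hc =>
    hNU (hin a a b haI haα haI haα hbI hbα c hc)
  have haa : a • a • C ≤ U := by
    rcases hC.2.2 a a b ⟨α, haα⟩ ⟨α, haα⟩ ⟨α, hbα⟩ U hU h1 with h | h | h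
    · exact h
    · exact absurd h habU
    · exact absurd h habU
  have h2 : a • b • b • C ≤ U := smul3_le fun c hc =>
    hNU (hin a b b haI haα hbI hbα hbI hbα c hc)
  have hbb : b • b • C ≤ U := by
    rcases hC.2.2 a b b ⟨α, haα⟩ ⟨α, hbα⟩ ⟨α, hbα⟩ U hU h2 with h | h | h
    · exact absurd h habU
    · exact h
    · exact absurd h habU
  have h3 : (a + b) • a • b • C ≤ U := smul3_le fun c hc => by
    have e : (a + b) • a • b • c = a • a • b • c + b • a • b • c := add_smul a b _
    rw [e]
    exact U.add_mem (hNU (hin a a b haI haα haI haα hbI hbα c hc))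
      (hNU (hin b a b hbI hbα haI haα hbI hbα c hc))
  rcases hC.2.2 (a + b) a b ⟨α, (𝒜 α).add_mem haα hbα⟩ ⟨α, haα⟩ ⟨α, hbα⟩ U hU h3 with h | h | h
  · refine habU (smul2_le fun c hc => ?_)
    have e : a • b • c = (a + b) • a • c - a • a • c := by
      rw [add_smul]
      rw [smul_comm a b c]
      abel
    rw [e]
    exact U.sub_mem (h (Submodule.smul_mem_pointwise_smul _ _ _ (Submodule.smul_mem_pointwise_smul _ _ _ hc)))
      (haa (Submodule.smul_mem_pointwise_smul _ _ _ (Submodule.smul_mem_pointwise_smul _ _ _ hc)))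
  · exact habU h
  · refine habU (smul2_le fun c hc => ?_)
    have e : a • b • c = (a + b) • b • c - b • b • c := by
      rw [add_smul]
      abel
    rw [e]
    exact U.sub_mem (h (Submodule.smul_mem_pointwise_smul _ _ _ (Submodule.smul_mem_pointwise_smul _ _ _ hc)))
      (hbb (Submodule.smul_mem_pointwise_smul _ _ _ (Submodule.smul_mem_pointwise_smul _ _ _ hc)))

theorem cons_smul_mem {C : Submodule R M} (I : Ideal R) (α : G) (k : ℕ)
    {r : R} (hrI : r ∈ I) (hrα : r ∈ 𝒜 α) {z : M}
    (hz : z ∈ Submodule.span R (IPowSet 𝒜 C I α k)) :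
    r • z ∈ Submodule.span R (IPowSet 𝒜 C I α (k + 1)) := by
  induction hz using Submodule.span_induction with
  | mem y hy =>
    obtain ⟨g, hg, c, hc, rfl⟩ := hy
    refine Submodule.subset_span ⟨Fin.cons r g, fun i => Fin.cases ⟨hrI, hrα⟩ (fun j => hg j) i,
      c, hc, ?_⟩
    rw [Fin.prod_univ_succ, Fin.cons_zero]
    simp only [Fin.cons_succ]
    rw [mul_smul]
  | zero => rw [smul_zero]; exact Submodule.zero_mem _
  | add y z _ _ ihy ihz => rw [smul_add]; exact Submodule.add_mem _ ihy ihz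
  | smul t y _ ih => rw [smul_comm]; exact Submodule.smul_mem _ t ih

theorem span_succ_le {C : Submodule R M} (I : Ideal R) (α : G) (k : ℕ) :
    Submodule.span R (IPowSet 𝒜 C I α (k + 1)) ≤ Submodule.span R (IPowSet 𝒜 C I α k) := by
  rw [Submodule.span_le]
  rintro x ⟨f, hf, c, hc, rfl⟩
  rw [Fin.prod_univ_succ, mul_smul]
  exact Submodule.smul_mem _ _
    (Submodule.subset_span ⟨fun i => f i.succ, fun i => hf i.succ, c, hc, rfl⟩)

end L1sec

theorem stmt3 {G : Type*} [Group G] [DecidableEq G] {R : Type*} [CommRing R]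
    {M : Type*} [AddCommGroup M] [Module R M]
    (𝒜 : G → AddSubgroup R) (ℳ : G → AddSubgroup M)
    (h𝒜 : IsRingGrading 𝒜) (hℳ : IsModuleGrading 𝒜 ℳ)
    (C : Submodule R M) (hC : IsGrClassical2AbsorbingSecond 𝒜 ℳ C)
    (I : Ideal R) (hI : IsGradedIdeal 𝒜 I) (α : G) :
    ∀ n : ℕ, 2 ≤ n →
      Submodule.span R {x : M | ∃ f : Fin n → R, (∀ i, f i ∈ I ∧ f i ∈ 𝒜 α) ∧
          ∃ c ∈ C, x = (∏ i, f i) • c} =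
        Submodule.span R {x : M | ∃ f : Fin (n + 1) → R, (∀ i, f i ∈ I ∧ f i ∈ 𝒜 α) ∧
          ∃ c ∈ C, x = (∏ i, f i) • c} := by
  intro n hn
  show Submodule.span R (IPowSet 𝒜 C I α n) = Submodule.span R (IPowSet 𝒜 C I α (n + 1))
  induction n, hn using Nat.le_induction with
  | base =>
    refine le_antisymm ?_ (span_succ_le I α 2)
    rw [Submodule.span_le]
    rintro x ⟨f, hf, c, hc, rfl⟩
    rw [Fin.prod_univ_two, mul_smul]
    exact L1 h𝒜 hℳ hC I α (hf 0).1 (hf 0).2 (hf 1).1 (hf 1).2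
      (Submodule.smul_mem_pointwise_smul _ _ _ (Submodule.smul_mem_pointwise_smul _ _ _ hc))
  | succ n hn ih =>
    refine le_antisymm ?_ (span_succ_le I α (n + 1))
    rw [Submodule.span_le]
    rintro x ⟨f, hf, c, hc, rfl⟩
    rw [Fin.prod_univ_succ, mul_smul]
    have hy : (∏ i : Fin n, f i.succ) • c ∈ Submodule.span R (IPowSet 𝒜 C I α (n + 1)) := by
      rw [← ih]
      exact Submodule.subset_span ⟨fun i => f i.succ, fun i => hf i.succ, c, hc, rfl⟩
    exact cons_smul_mem I α (n + 1) (hf 0).1 (hf 0).2 hy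
end

section
/- Let C be a graded classical 2-absorbing second submodule of M. Then for each completely graded irreducible submodule U of M with C ⊄ U, the ideal (U :_R C) = {r ∈ R : r·C ⊆ U} is a graded 2-absorbing ideal of R. -/
open Pointwise

section MyAux

open DirectSum

variable {G : Type*} [Group G] [DecidableEq G] {R : Type*} [CommRing R]
  {M : Type*} [AddCommGroup M] [Module R M]
  (𝒜 : G → AddSubgroup R) (ℳ : G → AddSubgroup M)

theorem myaux_decompose_smul [DirectSum.Decomposition 𝒜] [DirectSum.Decomposition ℳ]
    (hsm : ∀ ⦃α β : G⦄ ⦃r : R⦄ ⦃m : M⦄, r ∈ 𝒜 α → m ∈ ℳ β → r • m ∈ ℳ (α * β))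
    (r : R) {m : M} {δ : G} (hm : m ∈ ℳ δ) (α : G) :
    (decompose ℳ (r • m) α : M) = (decompose 𝒜 r (α * δ⁻¹) : R) • m := by
  classical
  set s := (decompose 𝒜 r).support with hs
  have hr : r = ∑ β ∈ s, (decompose 𝒜 r β : R) := (DirectSum.sum_support_decompose 𝒜 r).symm
  conv_lhs => rw [hr, Finset.sum_smul]
  rw [decompose_sum, DFinsupp.finset_sum_apply, AddSubmonoidClass.coe_finset_sum]
  have key : ∀ β ∈ s, (decompose ℳ ((decompose 𝒜 r β : R) • m) α : M)
      = if β = α * δ⁻¹ then (decompose 𝒜 r β : R) • m else 0 := by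
    intro β _
    have hmem : (decompose 𝒜 r β : R) • m ∈ ℳ (β * δ) := hsm (SetLike.coe_mem _) hm
    by_cases h : β = α * δ⁻¹
    · subst h
      rw [if_pos rfl]
      have : α * δ⁻¹ * δ = α := by group
      rw [this] at hmem
      exact decompose_of_mem_same ℳ hmem
    · rw [if_neg h]
      have hne : β * δ ≠ α := by
        intro hc; apply h; rw [← hc]; group
      exact decompose_of_mem_ne ℳ hmem hne
  rw [Finset.sum_congr rfl key, Finset.sum_ite_eq' s (α * δ⁻¹)
    (fun β => (decompose 𝒜 r β : R) • m)]
  by_cases h : α * δ⁻¹ ∈ s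
  · rw [if_pos h]
  · rw [if_neg h]
    have : decompose 𝒜 r (α * δ⁻¹) = 0 := DFinsupp.notMem_support_iff.mp h
    rw [this]
    simp

theorem myaux_comp_mem [DirectSum.Decomposition 𝒜] [DirectSum.Decomposition ℳ]
    (hsm : ∀ ⦃α β : G⦄ ⦃r : R⦄ ⦃m : M⦄, r ∈ 𝒜 α → m ∈ ℳ β → r • m ∈ ℳ (α * β))
    (N : Submodule R M) (hN : IsGradedSubmodule ℳ N) {n : M} (hn : n ∈ N) (α : G) :
    (decompose ℳ n α : M) ∈ N := by
  have key : ∀ x ∈ Submodule.span R {m : M | m ∈ N ∧ ∃ α, m ∈ ℳ α},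
      ∀ (r : R) (α : G), (decompose ℳ (r • x) α : M) ∈ N := by
    intro x hx
    induction hx using Submodule.span_induction with
    | mem y hy =>
      obtain ⟨hyN, δ, hyδ⟩ := hy
      intro r α
      rw [myaux_decompose_smul 𝒜 ℳ hsm r hyδ α]
      exact N.smul_mem _ hyN
    | zero => intro r α; simp
    | add y z _ _ ihy ihz =>
      intro r α
      rw [smul_add]
      have : (decompose ℳ (r • y + r • z) α : M)
          = (decompose ℳ (r • y) α : M) + (decompose ℳ (r • z) α : M) := by
        rw [decompose_add]; rfl
      rw [this]
      exact N.add_mem (ihy r α) (ihz r α)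
    | smul a y _ ihy =>
      intro r α
      rw [smul_comm r a y, smul_smul]
      rw [mul_comm a r]; exact ihy (r * a) α
  have := key n (hN n hn) 1 α
  rwa [one_smul] at this

theorem myaux_colon_comp [DirectSum.Decomposition 𝒜] [DirectSum.Decomposition ℳ]
    (hsm : ∀ ⦃α β : G⦄ ⦃r : R⦄ ⦃m : M⦄, r ∈ 𝒜 α → m ∈ ℳ β → r • m ∈ ℳ (α * β))
    (C U : Submodule R M) (hCg : IsGradedSubmodule ℳ C) (hUg : IsGradedSubmodule ℳ U)
    {r : R} (hr : r ∈ U.colon C) (α : G) :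
    (decompose 𝒜 r α : R) ∈ U.colon C := by
  rw [Submodule.mem_colon]
  intro p hp
  have key : ∀ x ∈ Submodule.span R {m : M | m ∈ C ∧ ∃ α, m ∈ ℳ α},
      (decompose 𝒜 r α : R) • x ∈ U := by
    intro x hx
    induction hx using Submodule.span_induction with
    | mem y hy =>
      obtain ⟨hyC, δ, hyδ⟩ := hy
      have h1 : r • y ∈ U := Submodule.mem_colon.mp hr y hyC
      have h2 : (decompose ℳ (r • y) (α * δ) : M) ∈ U :=
        myaux_comp_mem 𝒜 ℳ hsm U hUg h1 (α * δ)
      rw [myaux_decompose_smul 𝒜 ℳ hsm r hyδ (α * δ)] at h2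
      have : α * δ * δ⁻¹ = α := by group
      rwa [this] at h2
    | zero => simp
    | add y z _ _ ihy ihz => rw [smul_add]; exact U.add_mem ihy ihz
    | smul a y _ ihy => rw [smul_comm]; exact U.smul_mem a ihy
  exact key p (hCg p hp)

theorem myaux_smul_le {a : R} {C U : Submodule R M} :
    a • C ≤ U ↔ ∀ c ∈ C, a • c ∈ U := by
  constructor
  · intro h c hc
    exact h (Submodule.smul_mem_pointwise_smul c a C hc)
  · intro h x hx
    obtain ⟨c, hc, rfl⟩ := Submodule.mem_map.mp hx
    exact h c hc

end MyAux

theorem stmt4 {G : Type*} [Group G] [DecidableEq G] {R : Type*} [CommRing R]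
    {M : Type*} [AddCommGroup M] [Module R M]
    (𝒜 : G → AddSubgroup R) (ℳ : G → AddSubgroup M)
    (h𝒜 : IsRingGrading 𝒜) (hℳ : IsModuleGrading 𝒜 ℳ)
    (C : Submodule R M) (hC : IsGrClassical2AbsorbingSecond 𝒜 ℳ C)
    (U : Submodule R M) (hU : CompletelyGradedIrreducible ℳ U) (hCU : ¬ C ≤ U) :
    IsGr2AbsorbingIdeal 𝒜 (U.colon C) := by
  classical
  letI : DirectSum.Decomposition 𝒜 := h𝒜.isInternal.chooseDecomposition
  letI : DirectSum.Decomposition ℳ := hℳ.isInternal.chooseDecomposition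
  obtain ⟨hC0, hCg, hC3⟩ := hC
  have hUg := hU.1
  have colon_iff : ∀ a : R, a ∈ U.colon C ↔ a • C ≤ U := fun a =>
    Submodule.mem_colon.trans myaux_smul_le.symm
  refine ⟨?_, ?_, ?_⟩
  · intro h
    apply hCU
    intro c hc
    have h1 : (1 : R) ∈ U.colon C := h ▸ Submodule.mem_top
    simpa using Submodule.mem_colon.mp h1 c hc
  · intro r hr
    have hcomp : ∀ α, (DirectSum.decompose 𝒜 r α : R) ∈ U.colon C :=
      myaux_colon_comp 𝒜 ℳ hℳ.smul_mem C U hCg hUg hr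
    have hsum : r = ∑ β ∈ (DirectSum.decompose 𝒜 r).support, (DirectSum.decompose 𝒜 r β : R) :=
      (DirectSum.sum_support_decompose 𝒜 r).symm
    rw [hsum]
    refine Submodule.sum_mem _ fun β _ => Ideal.subset_span ⟨hcomp β, β, SetLike.coe_mem _⟩
  · intro r s t hr hs ht hrst
    have h1 : r • s • t • C ≤ U := by
      have := (colon_iff _).mp hrst
      rwa [mul_smul, mul_smul] at this
    rcases hC3 r s t hr hs ht U hU h1 with h | h | h
    · exact Or.inl ((colon_iff _).mpr (by rwa [mul_smul]))
    · exact Or.inr (Or.inr ((colon_iff _).mpr (by rwa [mul_smul])))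
    · exact Or.inr (Or.inl ((colon_iff _).mpr (by rwa [mul_smul])))
end

section
/- Let C be a graded classical 2-absorbing second submodule of M, let I = ⊕_{λ∈G} I_λ be a graded ideal of R, and let λ ∈ G be such that I_λ ⊄ Ann_R(C). Then the submodule I_λ·C is a graded classical 2-absorbing second submodule of M. -/
open Pointwise

lemma smul_submod_le_iff {R M : Type*} [CommRing R] [AddCommGroup M] [Module R M]
    (x : R) (N U : Submodule R M) : x • N ≤ U ↔ ∀ n ∈ N, x • n ∈ U := by
  constructor
  · intro h n hn; exact h (Submodule.smul_mem_pointwise_smul n x N hn)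
  · intro h m hm
    obtain ⟨n, hn, rfl⟩ := Submodule.mem_map.mp hm
    exact h n hn

lemma smul_span_le_iff {R M : Type*} [CommRing R] [AddCommGroup M] [Module R M]
    (x : R) (S : Set M) (U : Submodule R M) :
    x • Submodule.span R S ≤ U ↔ ∀ m ∈ S, x • m ∈ U := by
  rw [smul_submod_le_iff]
  constructor
  · intro h m hm; exact h m (Submodule.subset_span hm)
  · intro h n hn
    refine Submodule.span_induction (p := fun n _ => x • n ∈ U) h ?_ ?_ ?_ hn
    · simp
    · intro a b _ _ ha hb; rw [smul_add]; exact U.add_mem ha hb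
    · intro r a _ ha; rw [smul_comm]; exact U.smul_mem r ha


theorem stmt5 {G : Type*} [Group G] [DecidableEq G] {R : Type*} [CommRing R]
    {M : Type*} [AddCommGroup M] [Module R M]
    (𝒜 : G → AddSubgroup R) (ℳ : G → AddSubgroup M)
    (h𝒜 : IsRingGrading 𝒜) (hℳ : IsModuleGrading 𝒜 ℳ)
    (C : Submodule R M) (hC : IsGrClassical2AbsorbingSecond 𝒜 ℳ C)
    (I : Ideal R) (hI : IsGradedIdeal 𝒜 I) (lam : G)
    (hnl : ∃ a : R, a ∈ I ∧ a ∈ 𝒜 lam ∧ ∃ c ∈ C, a • c ≠ (0 : M)) :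
    IsGrClassical2AbsorbingSecond 𝒜 ℳ
      (Submodule.span R {x : M | ∃ a : R, (a ∈ I ∧ a ∈ 𝒜 lam) ∧ ∃ c ∈ C, x = a • c}) := by
  set S : Set M := {x : M | ∃ a : R, (a ∈ I ∧ a ∈ 𝒜 lam) ∧ ∃ c ∈ C, x = a • c} with hS
  set D : Submodule R M := Submodule.span R S with hD
  obtain ⟨hCne, hCgr, hCabs⟩ := hC
  refine ⟨?_, ?_, ?_⟩
  · -- nonzero
    obtain ⟨a, haI, hal, c, hcC, hne⟩ := hnl
    intro hbot
    apply hne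
    have : a • c ∈ D := Submodule.subset_span ⟨a, ⟨haI, hal⟩, c, hcC, rfl⟩
    rw [hbot] at this
    simpa using this
  · -- graded
    intro n hn
    set T := Submodule.span R {m : M | m ∈ D ∧ ∃ α, m ∈ ℳ α} with hT
    refine Submodule.span_induction (p := fun n _ => n ∈ T) ?_ T.zero_mem
      (fun _ _ _ _ ha hb => T.add_mem ha hb) (fun r a _ ha => T.smul_mem r ha) hn
    rintro x ⟨a, ⟨haI, hal⟩, c, hcC, rfl⟩
    have hc' := hCgr c hcC
    refine Submodule.span_induction (p := fun m _ => a • m ∈ T) ?_ (by simpa using T.zero_mem)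
      (fun u v _ _ hu hv => by show a • (u + v) ∈ T; rw [smul_add]; exact T.add_mem hu hv)
      (fun r u _ hu => by show a • r • u ∈ T; rw [smul_comm]; exact T.smul_mem r hu) hc'
    rintro m ⟨hmC, β, hmβ⟩
    refine Submodule.subset_span ⟨Submodule.subset_span ⟨a, ⟨haI, hal⟩, m, hmC, rfl⟩,
      lam * β, hℳ.smul_mem hal hmβ⟩
  · -- absorbing
    intro r s t hr hs ht U hU hle
    obtain ⟨α, hrα⟩ := hr
    obtain ⟨β, hsβ⟩ := hs
    obtain ⟨γ, htγ⟩ := ht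
    simp only [smul_smul] at hle ⊢
    rw [smul_span_le_iff] at hle
    -- key: for homogeneous a ∈ I_λ
    have key : ∀ a : R, a ∈ I → a ∈ 𝒜 lam →
        ((r * a * s) • C ≤ U ∨ (s * t) • C ≤ U ∨ (r * a * t) • C ≤ U) := by
      intro a haI hal
      have h3 := hCabs (r * a) s t ⟨α * lam, h𝒜.mul_mem hrα hal⟩ ⟨β, hsβ⟩ ⟨γ, htγ⟩ U hU ?_
      · simpa only [smul_smul] using h3
      · simp only [smul_smul]
        rw [smul_submod_le_iff]
        intro c hc
        have := hle (a • c) ⟨a, ⟨haI, hal⟩, c, hc, rfl⟩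
        rw [smul_smul, show r * (s * t) * a = r * a * (s * t) by ring] at this
        exact this
    by_cases hst : (s * t) • C ≤ U
    · right; left
      rw [smul_span_le_iff]
      rintro x ⟨a, ⟨haI, hal⟩, c, hcC, rfl⟩
      rw [smul_smul, show s * t * a = a * (s * t) by ring, ← smul_smul]
      exact U.smul_mem a ((smul_submod_le_iff _ _ _).mp hst c hcC)
    · have key2 : ∀ a : R, a ∈ I → a ∈ 𝒜 lam →
          ((r * a * s) • C ≤ U ∨ (r * a * t) • C ≤ U) := by
        intro a haI hal
        rcases key a haI hal with h | h | h
        · exact Or.inl h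
        · exact absurd h hst
        · exact Or.inr h
      by_cases hrs : ∀ a : R, a ∈ I → a ∈ 𝒜 lam → (r * a * s) • C ≤ U
      · left
        rw [smul_span_le_iff]
        rintro x ⟨a, ⟨haI, hal⟩, c, hcC, rfl⟩
        rw [smul_smul, show r * s * a = r * a * s by ring]
        exact (smul_submod_le_iff _ _ _).mp (hrs a haI hal) c hcC
      · by_cases hrt : ∀ a : R, a ∈ I → a ∈ 𝒜 lam → (r * a * t) • C ≤ U
        · right; right
          rw [smul_span_le_iff]
          rintro x ⟨a, ⟨haI, hal⟩, c, hcC, rfl⟩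
          rw [smul_smul, show r * t * a = r * a * t by ring]
          exact (smul_submod_le_iff _ _ _).mp (hrt a haI hal) c hcC
        · exfalso
          push_neg at hrs hrt
          obtain ⟨a1, ha1I, ha1l, h1⟩ := hrs
          obtain ⟨a2, ha2I, ha2l, h2⟩ := hrt
          have e1 : (r * a1 * t) • C ≤ U := (key2 a1 ha1I ha1l).resolve_left h1
          have e2 : (r * a2 * s) • C ≤ U := (key2 a2 ha2I ha2l).resolve_right h2
          rcases key2 (a1 + a2) (I.add_mem ha1I ha2I) ((𝒜 lam).add_mem ha1l ha2l) with h | h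
          · apply h1
            rw [smul_submod_le_iff]
            intro c hc
            have hsum := (smul_submod_le_iff _ _ _).mp h c hc
            have h2' := (smul_submod_le_iff _ _ _).mp e2 c hc
            have : (r * a1 * s) • c = (r * (a1 + a2) * s) • c - (r * a2 * s) • c := by
              rw [show r * (a1 + a2) * s = r * a1 * s + r * a2 * s by ring, add_smul]
              abel
            rw [this]
            exact U.sub_mem hsum h2'
          · apply h2
            rw [smul_submod_le_iff]
            intro c hc
            have hsum := (smul_submod_le_iff _ _ _).mp h c hc
            have h1' := (smul_submod_le_iff _ _ _).mp e1 c hc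
            have : (r * a2 * t) • c = (r * (a1 + a2) * t) • c - (r * a1 * t) • c := by
              rw [show r * (a1 + a2) * t = r * a1 * t + r * a2 * t by ring, add_smul]
              abel
            rw [this]
            exact U.sub_mem hsum h1'
end

section
/- Let C be a non-zero graded submodule of M. Then C is a graded strongly classical 2-absorbing second submodule of M if and only if for every r, s, t ∈ h(R), either r·s·t·C = r·s·C or r·s·t·C = s·t·C or r·s·t·C = r·t·C. -/
open Pointwise

section Aux

variable {G : Type*} [Group G] [DecidableEq G] {R : Type*} [CommRing R]
  {M : Type*} [AddCommGroup M] [Module R M]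

private lemma mem_rsmul {r : R} {N : Submodule R M} {x : M} :
    x ∈ r • N ↔ ∃ y ∈ N, r • y = x := by
  rw [← SetLike.mem_coe, Submodule.coe_pointwise_smul]
  exact Set.mem_smul_set

private lemma rsmul_le_self (r : R) (N : Submodule R M) : r • N ≤ N := by
  intro x hx
  obtain ⟨y, hy, rfl⟩ := mem_rsmul.mp hx
  exact N.smul_mem r hy

private lemma rsmul_mono (r : R) {N P : Submodule R M} (h : N ≤ P) : r • N ≤ r • P := by
  intro x hx
  obtain ⟨y, hy, rfl⟩ := mem_rsmul.mp hx
  exact mem_rsmul.mpr ⟨y, h hy, rfl⟩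

private lemma smul_graded (𝒜 : G → AddSubgroup R) (ℳ : G → AddSubgroup M)
    (hℳ : IsModuleGrading 𝒜 ℳ) {r : R} (hr : ∃ α, r ∈ 𝒜 α)
    {N : Submodule R M} (hN : IsGradedSubmodule ℳ N) :
    IsGradedSubmodule ℳ (r • N) := by
  obtain ⟨α, hrα⟩ := hr
  have key : ∀ y ∈ Submodule.span R {m : M | m ∈ N ∧ ∃ β, m ∈ ℳ β},
      r • y ∈ Submodule.span R {m : M | m ∈ r • N ∧ ∃ β, m ∈ ℳ β} := by
    intro y hy
    induction hy using Submodule.span_induction with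
    | mem x hx =>
        obtain ⟨hxN, β, hxβ⟩ := hx
        exact Submodule.subset_span
          ⟨mem_rsmul.mpr ⟨x, hxN, rfl⟩, α * β, hℳ.smul_mem hrα hxβ⟩
    | zero => rw [smul_zero]; exact Submodule.zero_mem _
    | add x y _ _ hx hy => rw [smul_add]; exact Submodule.add_mem _ hx hy
    | smul a x _ hx => rw [smul_comm r a x]; exact Submodule.smul_mem _ a hx
  intro n hn
  obtain ⟨y, hy, rfl⟩ := mem_rsmul.mp hn
  exact key y (hN y hy)

private lemma exists_cgi (ℳ : G → AddSubgroup M)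
    {N : Submodule R M} (hN : IsGradedSubmodule ℳ N) {x : M} (hx : x ∉ N) :
    ∃ U : Submodule R M, CompletelyGradedIrreducible ℳ U ∧ N ≤ U ∧ x ∉ U := by
  set 𝒮 : Set (Submodule R M) :=
    {D | IsGradedSubmodule ℳ D ∧ N ≤ D ∧ x ∉ D} with h𝒮
  obtain ⟨U, hNU, hU𝒮, hUmax⟩ :=
    zorn_le_nonempty₀ 𝒮 (fun c hc𝒮 hchain y hyc => by
      refine ⟨sSup c, ⟨?_, ?_, ?_⟩, fun z hz => le_sSup hz⟩
      · intro m hm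
        obtain ⟨D, hDc, hmD⟩ :=
          (Submodule.mem_sSup_of_directed ⟨y, hyc⟩ hchain.directedOn).mp hm
        refine Submodule.span_mono ?_ ((hc𝒮 hDc).1 m hmD)
        rintro z ⟨hzD, β, hzβ⟩
        exact ⟨le_sSup hDc hzD, β, hzβ⟩
      · exact le_trans (hc𝒮 hyc).2.1 (le_sSup hyc)
      · intro hxs
        obtain ⟨D, hDc, hxD⟩ :=
          (Submodule.mem_sSup_of_directed ⟨y, hyc⟩ hchain.directedOn).mp hxs
        exact (hc𝒮 hDc).2.2 hxD)
      N ⟨hN, le_rfl, hx⟩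
  obtain ⟨hUgr, hNU', hxU⟩ := hU𝒮
  refine ⟨U, ⟨hUgr, ?_, ?_⟩, hNU, hxU⟩
  · intro h
    exact hxU (h ▸ Submodule.mem_top)
  · intro S hSgr hUinf
    by_contra hUS
    apply hxU
    rw [hUinf]
    rw [Submodule.mem_sInf]
    intro D hDS
    by_contra hxD
    have hUD : U ≤ D := hUinf ▸ sInf_le hDS
    have : D = U := le_antisymm
      (hUmax ⟨hSgr D hDS, le_trans hNU' hUD, hxD⟩ hUD) hUD
    exact hUS (this ▸ hDS)

end Aux

theorem stmt9 {G : Type*} [Group G] [DecidableEq G] {R : Type*} [CommRing R]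
    {M : Type*} [AddCommGroup M] [Module R M]
    (𝒜 : G → AddSubgroup R) (ℳ : G → AddSubgroup M)
    (h𝒜 : IsRingGrading 𝒜) (hℳ : IsModuleGrading 𝒜 ℳ)
    (C : Submodule R M) (hC0 : C ≠ ⊥) (hCgr : IsGradedSubmodule ℳ C) :
    IsGrStronglyClassical2AbsorbingSecond 𝒜 ℳ C ↔
      ∀ r s t : R, (∃ α, r ∈ 𝒜 α) → (∃ β, s ∈ 𝒜 β) → (∃ γ, t ∈ 𝒜 γ) →
        (r • s • t • C = r • s • C ∨ r • s • t • C = s • t • C ∨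
          r • s • t • C = r • t • C) := by
  constructor
  · rintro ⟨-, -, habs⟩ r s t hr hs ht
    have h1 : r • s • t • C ≤ r • s • C :=
      rsmul_mono r (rsmul_mono s (rsmul_le_self t C))
    have h2 : r • s • t • C ≤ s • t • C := by
      rw [smul_comm r s, smul_comm r t]
      exact rsmul_mono s (rsmul_mono t (rsmul_le_self r C))
    have h3 : r • s • t • C ≤ r • t • C := by
      rw [smul_comm s t]
      exact rsmul_mono r (rsmul_mono t (rsmul_le_self s C))
    by_contra hcon
    push_neg at hcon
    obtain ⟨hne1, hne2, hne3⟩ := hcon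
    have hle1 : ¬ r • s • C ≤ r • s • t • C := fun h => hne1 (le_antisymm h1 h)
    have hle2 : ¬ s • t • C ≤ r • s • t • C := fun h => hne2 (le_antisymm h2 h)
    have hle3 : ¬ r • t • C ≤ r • s • t • C := fun h => hne3 (le_antisymm h3 h)
    obtain ⟨x₁, hx₁m, hx₁⟩ := SetLike.not_le_iff_exists.mp hle1
    obtain ⟨x₂, hx₂m, hx₂⟩ := SetLike.not_le_iff_exists.mp hle2
    obtain ⟨x₃, hx₃m, hx₃⟩ := SetLike.not_le_iff_exists.mp hle3
    have hgr : IsGradedSubmodule ℳ (r • s • t • C) :=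
      smul_graded 𝒜 ℳ hℳ hr (smul_graded 𝒜 ℳ hℳ hs (smul_graded 𝒜 ℳ hℳ ht hCgr))
    obtain ⟨U₁, hU₁, hle₁, hxU₁⟩ := exists_cgi ℳ hgr hx₁
    obtain ⟨U₂, hU₂, hle₂, hxU₂⟩ := exists_cgi ℳ hgr hx₂
    obtain ⟨U₃, hU₃, hle₃, hxU₃⟩ := exists_cgi ℳ hgr hx₃
    have hmeet : r • s • t • C ≤ U₁ ⊓ U₂ ⊓ U₃ :=
      le_inf (le_inf hle₁ hle₂) hle₃
    rcases habs r s t hr hs ht U₁ U₂ U₃ hU₁ hU₂ hU₃ hmeet with h | h | h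
    · exact hxU₁ ((h hx₁m).1.1
      )
    · exact hxU₂ ((h hx₂m).1.2)
    · exact hxU₃ ((h hx₃m).2)
  · intro h
    refine ⟨hC0, hCgr, ?_⟩
    intro r s t hr hs ht U₁ U₂ U₃ _ _ _ hle
    rcases h r s t hr hs ht with heq | heq | heq
    · exact Or.inl (heq ▸ hle)
    · exact Or.inr (Or.inl (heq ▸ hle))
    · exact Or.inr (Or.inr (heq ▸ hle))
end
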